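/- Let X and Y be compact metric spaces, λ > 0, κ ≥ 0, let c : X × Y → ℝ be continuous and satisfy |c(x, y) − c(x′, y)| ≤ κ · dist(x, x′) for all x, x′ ∈ X and y ∈ Y, and let ν be a Borel probability measure on Y. For a Borel probability measure μ on X define W(μ) as the supremum over continuous ψ : Y → ℝ of ∫_X ψ^{c,λ}(x) dμ(x) + ∫_Y ψ(y) dν(y). Then for any two Borel probability measures μ₁, μ₂ on X, |W(μ₁) − W(μ₂)| ≤ κ · sup { |∫ φ dμ₁ − ∫ φ dμ₂| : φ : X → ℝ is 1-Lipschitz }. -/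

import Mathlib

open MeasureTheory

/-- Semi-dual formulation of the entropy-regularized optimal transport cost
`OT_c^λ(μ, ν)` : the supremum over continuous dual potentials `ψ : Y → ℝ` of
`∫ ψ^{c,λ} dμ + ∫ ψ dν`, where `ψ^{c,λ}(x) = -λ log ∫ exp((ψ(y) - c(x,y))/λ) dν(y)`. -/
noncomputable def Wreg {X : Type*} [MeasurableSpace X]
    {Y : Type*} [TopologicalSpace Y] [MeasurableSpace Y]
    (lam : ℝ) (c : X × Y → ℝ) (ν : Measure Y) (μ : Measure X) : ℝ :=
  ⨆ ψ : C(Y, ℝ),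
    (∫ x, (-lam * Real.log (∫ y, Real.exp ((ψ y - c (x, y)) / lam) ∂ν)) ∂μ
      + ∫ y, ψ y ∂ν)

lemma cont_integrable_aux {Z : Type*} [MeasurableSpace Z] [MetricSpace Z] [CompactSpace Z]
    [BorelSpace Z] (m : Measure Z) [IsFiniteMeasure m] {f : Z → ℝ} (hf : Continuous f) :
    Integrable f m := by
  have h : HasCompactSupport f := (isClosed_tsupport f).isCompact
  exact hf.integrable_of_hasCompactSupport h

lemma exp_integral_le_aux {Y : Type*} [MeasurableSpace Y] (ν : Measure Y) [IsProbabilityMeasure ν]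
    {g : Y → ℝ} (hg : Integrable g ν) (hexp : Integrable (fun y => Real.exp (g y)) ν) :
    Real.exp (∫ y, g y ∂ν) ≤ ∫ y, Real.exp (g y) ∂ν := by
  set a := ∫ y, g y ∂ν with ha
  have h : ∀ y, Real.exp a * (1 + (g y - a)) ≤ Real.exp (g y) := by
    intro y
    have h1 := Real.add_one_le_exp (g y - a)
    calc Real.exp a * (1 + (g y - a)) ≤ Real.exp a * Real.exp (g y - a) := by
          apply mul_le_mul_of_nonneg_left _ (Real.exp_pos a).le; linarith
      _ = Real.exp (g y) := by rw [← Real.exp_add]; ring_nf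
  have hint : Integrable (fun y => Real.exp a * (1 + (g y - a))) ν :=
    Integrable.const_mul ((integrable_const 1).add (hg.sub (integrable_const a))) _
  calc Real.exp a = ∫ y, Real.exp a * (1 + (g y - a)) ∂ν := by
        have hsub : Integrable (fun y => g y - a) ν := hg.sub (integrable_const a)
        rw [integral_const_mul, integral_add (integrable_const 1) hsub,
          integral_sub hg (integrable_const a), integral_const, integral_const]
        simp [ha]
    _ ≤ _ := integral_mono hint hexp h

/-- If `c` is continuous and `κ`-Lipschitz in its first variable, the regularized
transport cost is controlled by `κ` times the Kantorovich–Rubinstein distance: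
`|W(μ₁) - W(μ₂)| ≤ κ · sup { |∫ φ dμ₁ - ∫ φ dμ₂| : φ 1-Lipschitz }`. -/
theorem Wreg_diff_le_kantorovich {X : Type*} [MetricSpace X] [CompactSpace X]
    [MeasurableSpace X] [BorelSpace X]
    {Y : Type*} [MetricSpace Y] [CompactSpace Y] [MeasurableSpace Y] [BorelSpace Y]
    (lam : ℝ) (hlam : 0 < lam) (κ : ℝ) (hκ : 0 ≤ κ)
    (c : X × Y → ℝ) (hc : Continuous c)
    (hclip : ∀ x x' : X, ∀ y : Y, |c (x, y) - c (x', y)| ≤ κ * dist x x')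
    (ν : Measure Y) [IsProbabilityMeasure ν]
    (μ₁ μ₂ : Measure X) [IsProbabilityMeasure μ₁] [IsProbabilityMeasure μ₂] :
    |Wreg lam c ν μ₁ - Wreg lam c ν μ₂| ≤
      κ * sSup {r : ℝ | ∃ φ : X → ℝ, LipschitzWith 1 φ ∧
        r = |∫ x, φ x ∂μ₁ - ∫ x, φ x ∂μ₂|} := by
  -- nonemptiness
  have hXne : Nonempty X := by
    by_contra h
    rw [not_nonempty_iff] at h
    have h1 : (μ₁ Set.univ) = 1 := measure_univ
    rw [Set.univ_eq_empty_iff.2 h, measure_empty] at h1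
    exact zero_ne_one h1
  have hYne : Nonempty Y := by
    by_contra h
    rw [not_nonempty_iff] at h
    have h1 : (ν Set.univ) = 1 := measure_univ
    rw [Set.univ_eq_empty_iff.2 h, measure_empty] at h1
    exact zero_ne_one h1
  set S := {r : ℝ | ∃ φ : X → ℝ, LipschitzWith 1 φ ∧
      r = |∫ x, φ x ∂μ₁ - ∫ x, φ x ∂μ₂|} with hS
  set D := sSup S with hD
  -- S is bounded above
  set diamX := Metric.diam (Set.univ : Set X) with hdiamX
  have hSbdd : BddAbove S := by
    refine ⟨2 * diamX, ?_⟩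
    rintro r ⟨φ, hφ, rfl⟩
    have hx₀ : ∃ x₀ : X, True := ⟨Classical.arbitrary X, trivial⟩
    obtain ⟨x₀, -⟩ := hx₀
    have hφc : Continuous φ := hφ.continuous
    have hint : ∀ (μ : Measure X) [IsProbabilityMeasure μ],
        Integrable (fun x => φ x - φ x₀) μ := fun μ _ =>
      cont_integrable_aux μ (hφc.sub continuous_const)
    have hkey : ∀ (μ : Measure X) [IsProbabilityMeasure μ],
        |∫ x, (φ x - φ x₀) ∂μ| ≤ diamX := by
      intro μ _
      have := norm_integral_le_of_norm_le_const (μ := μ) (f := fun x => φ x - φ x₀)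
        (C := diamX) (Filter.Eventually.of_forall fun x => by
          have h1 : dist (φ x) (φ x₀) ≤ 1 * dist x x₀ := hφ.dist_le_mul x x₀
          have h2 : dist x x₀ ≤ diamX :=
            Metric.dist_le_diam_of_mem isCompact_univ.isBounded trivial trivial
          rw [Real.norm_eq_abs, ← Real.dist_eq]
          linarith)
      simpa [Real.norm_eq_abs] using this
    have heq : ∀ (μ : Measure X) [IsProbabilityMeasure μ],
        ∫ x, φ x ∂μ = (∫ x, (φ x - φ x₀) ∂μ) + φ x₀ := by
      intro μ _
      rw [integral_sub (cont_integrable_aux μ hφc) (integrable_const _), integral_const]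
      simp
    rw [heq μ₁, heq μ₂]
    have h1 := hkey μ₁
    have h2 := hkey μ₂
    calc |((∫ x, (φ x - φ x₀) ∂μ₁) + φ x₀) - ((∫ x, (φ x - φ x₀) ∂μ₂) + φ x₀)|
        = |(∫ x, (φ x - φ x₀) ∂μ₁) - (∫ x, (φ x - φ x₀) ∂μ₂)| := by
          rw [add_sub_add_right_eq_sub]
      _ ≤ |∫ x, (φ x - φ x₀) ∂μ₁| + |∫ x, (φ x - φ x₀) ∂μ₂| := abs_sub _ _
      _ ≤ 2 * diamX := by linarith
  have hD0 : 0 ≤ D := by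
    apply le_csSup hSbdd
    exact ⟨fun _ => 0, LipschitzWith.const' 0, by simp⟩
  -- the (c,λ)-transform
  set f : C(Y, ℝ) → X → ℝ := fun ψ x =>
    -lam * Real.log (∫ y, Real.exp ((ψ y - c (x, y)) / lam) ∂ν) with hf
  set I : C(Y, ℝ) → X → ℝ := fun ψ x => ∫ y, Real.exp ((ψ y - c (x, y)) / lam) ∂ν with hI
  have hIcont : ∀ (ψ : C(Y, ℝ)) (x : X),
      Continuous (fun y => Real.exp ((ψ y - c (x, y)) / lam)) := fun ψ x =>
    (Real.continuous_exp.comp (((ψ.continuous.sub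
      (hc.comp (Continuous.prodMk_right x))).div_const lam)))
  have hIint : ∀ (ψ : C(Y, ℝ)) (x : X),
      Integrable (fun y => Real.exp ((ψ y - c (x, y)) / lam)) ν := fun ψ x =>
    cont_integrable_aux ν (hIcont ψ x)
  have hIpos : ∀ (ψ : C(Y, ℝ)) (x : X), 0 < I ψ x := by
    intro ψ x
    obtain ⟨y₀, -, hy₀⟩ := isCompact_univ.exists_isMinOn Set.univ_nonempty
      ((hIcont ψ x).continuousOn)
    set m := Real.exp ((ψ y₀ - c (x, y₀)) / lam) with hm
    have hmpos : 0 < m := Real.exp_pos _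
    have : m ≤ I ψ x := by
      have := integral_mono (integrable_const m) (hIint ψ x)
        (fun y => isMinOn_iff.1 hy₀ y trivial)
      simpa using this
    linarith
  -- Lipschitz property of f ψ
  have hflip : ∀ (ψ : C(Y, ℝ)) (x x' : X), f ψ x - f ψ x' ≤ κ * dist x x' := by
    intro ψ x x'
    have hIle : I ψ x' ≤ Real.exp (κ * dist x x' / lam) * I ψ x := by
      rw [hI]
      simp only
      rw [← integral_const_mul]
      apply integral_mono (hIint ψ x') ((hIint ψ x).const_mul _)
      intro y
      calc Real.exp ((ψ y - c (x', y)) / lam)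
          ≤ Real.exp (κ * dist x x' / lam + (ψ y - c (x, y)) / lam) := by
            apply Real.exp_le_exp.2
            have h2 := (abs_le.1 (hclip x x' y)).2
            rw [← add_div, div_le_div_iff₀ hlam hlam]
            nlinarith
        _ = Real.exp (κ * dist x x' / lam) * Real.exp ((ψ y - c (x, y)) / lam) :=
            Real.exp_add _ _
    have hlog : Real.log (I ψ x') ≤ κ * dist x x' / lam + Real.log (I ψ x) := by
      have := Real.log_le_log (hIpos ψ x') hIle
      rwa [Real.log_mul (Real.exp_ne_zero _) (hIpos ψ x).ne', Real.log_exp] at this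
    have : f ψ x - f ψ x' = -lam * (Real.log (I ψ x) - Real.log (I ψ x')) := by
      rw [hf]; ring
    rw [this]
    have : -(κ * dist x x' / lam) ≤ Real.log (I ψ x) - Real.log (I ψ x') := by linarith
    calc -lam * (Real.log (I ψ x) - Real.log (I ψ x'))
        ≤ -lam * (-(κ * dist x x' / lam)) := by nlinarith
      _ = κ * dist x x' := by field_simp
  have hfabs : ∀ (ψ : C(Y, ℝ)) (x x' : X), |f ψ x - f ψ x'| ≤ κ * dist x x' := by
    intro ψ x x'
    rw [abs_sub_le_iff]
    exact ⟨hflip ψ x x', by rw [dist_comm]; exact hflip ψ x' x⟩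
  have hfcont : ∀ ψ : C(Y, ℝ), Continuous (f ψ) := by
    intro ψ
    have : LipschitzWith ⟨κ, hκ⟩ (f ψ) := by
      apply LipschitzWith.of_dist_le_mul
      intro x x'
      rw [Real.dist_eq]
      exact hfabs ψ x x'
    exact this.continuous
  have hfint : ∀ (ψ : C(Y, ℝ)) (μ : Measure X) [IsProbabilityMeasure μ],
      Integrable (f ψ) μ := fun ψ μ _ => cont_integrable_aux μ (hfcont ψ)
  -- key KR bound
  have hKR : ∀ (ψ : C(Y, ℝ)), |(∫ x, f ψ x ∂μ₁) - ∫ x, f ψ x ∂μ₂| ≤ κ * D := by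
    intro ψ
    rcases eq_or_lt_of_le hκ with hκ0 | hκpos
    · -- κ = 0 : f ψ constant
      have hconst : ∀ x x', f ψ x = f ψ x' := by
        intro x x'
        have h := hfabs ψ x x'
        rw [← hκ0, zero_mul] at h
        have h0 : |f ψ x - f ψ x'| = 0 := le_antisymm h (abs_nonneg _)
        have := abs_eq_zero.1 h0
        linarith
      obtain ⟨x₀⟩ := hXne
      have h1 : ∫ x, f ψ x ∂μ₁ = f ψ x₀ := by
        have : (fun x => f ψ x) = fun _ => f ψ x₀ := funext fun x => hconst x x₀
        rw [this, integral_const]; simp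
      have h2 : ∫ x, f ψ x ∂μ₂ = f ψ x₀ := by
        have : (fun x => f ψ x) = fun _ => f ψ x₀ := funext fun x => hconst x x₀
        rw [this, integral_const]; simp
      rw [h1, h2, sub_self, abs_zero, ← hκ0, zero_mul]
    · -- κ > 0
      set φ : X → ℝ := fun x => κ⁻¹ * f ψ x with hφ
      have hφlip : LipschitzWith 1 φ := by
        apply LipschitzWith.of_dist_le_mul
        intro x x'
        rw [Real.dist_eq, hφ]
        have : κ⁻¹ * f ψ x - κ⁻¹ * f ψ x' = κ⁻¹ * (f ψ x - f ψ x') := by ring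
        rw [this, abs_mul, abs_of_nonneg (inv_nonneg.2 hκ)]
        calc κ⁻¹ * |f ψ x - f ψ x'| ≤ κ⁻¹ * (κ * dist x x') :=
              mul_le_mul_of_nonneg_left (hfabs ψ x x') (inv_nonneg.2 hκ)
          _ = 1 * dist x x' := by field_simp
      have hmem : |∫ x, φ x ∂μ₁ - ∫ x, φ x ∂μ₂| ∈ S := ⟨φ, hφlip, rfl⟩
      have hle : |∫ x, φ x ∂μ₁ - ∫ x, φ x ∂μ₂| ≤ D := le_csSup hSbdd hmem
      have heq : ∀ (μ : Measure X) [IsProbabilityMeasure μ],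
          ∫ x, f ψ x ∂μ = κ * ∫ x, φ x ∂μ := by
        intro μ _
        have h3 : ∫ x, φ x ∂μ = κ⁻¹ * ∫ x, f ψ x ∂μ := integral_const_mul κ⁻¹ (f ψ)
        rw [h3, ← mul_assoc, mul_inv_cancel₀ hκpos.ne', one_mul]
      rw [heq μ₁, heq μ₂, ← mul_sub, abs_mul, abs_of_nonneg hκ]
      exact mul_le_mul_of_nonneg_left hle hκ
  -- upper bound for F
  obtain ⟨p, -, hp⟩ := isCompact_univ.exists_isMaxOn (Set.univ_nonempty (α := X × Y))
    hc.continuousOn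
  set C := c p with hCdef
  have hcle : ∀ q : X × Y, c q ≤ C := fun q => isMaxOn_iff.1 hp q trivial
  set F : Measure X → C(Y, ℝ) → ℝ := fun μ ψ => (∫ x, f ψ x ∂μ) + ∫ y, ψ y ∂ν with hF
  have hψint : ∀ ψ : C(Y, ℝ), Integrable (fun y => ψ y) ν := fun ψ =>
    cont_integrable_aux ν ψ.continuous
  have hfub : ∀ (ψ : C(Y, ℝ)) (x : X), f ψ x ≤ C - ∫ y, ψ y ∂ν := by
    intro ψ x
    set g : Y → ℝ := fun y => (ψ y - c (x, y)) / lam with hg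
    have hgint : Integrable g ν :=
      cont_integrable_aux ν ((ψ.continuous.sub (hc.comp (Continuous.prodMk_right x))).div_const lam)
    have hjensen : Real.exp (∫ y, g y ∂ν) ≤ I ψ x :=
      exp_integral_le_aux ν hgint (hIint ψ x)
    have hloga : (∫ y, g y ∂ν) ≤ Real.log (I ψ x) :=
      (Real.le_log_iff_exp_le (hIpos ψ x)).2 hjensen
    have hfle : f ψ x ≤ -lam * ∫ y, g y ∂ν := by
      rw [hf]
      simp only
      nlinarith
    have hgval : ∫ y, g y ∂ν = ((∫ y, ψ y ∂ν) - ∫ y, c (x, y) ∂ν) / lam := by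
      have hsub : ∫ y, (ψ y - c (x, y)) ∂ν = (∫ y, ψ y ∂ν) - ∫ y, c (x, y) ∂ν :=
        integral_sub (hψint ψ) (cont_integrable_aux ν (hc.comp (Continuous.prodMk_right x)))
      rw [hg]
      simp only
      rw [integral_div, hsub]
    have hcint : ∫ y, c (x, y) ∂ν ≤ C := by
      calc ∫ y, c (x, y) ∂ν ≤ ∫ _, C ∂ν := integral_mono
            (cont_integrable_aux ν (hc.comp (Continuous.prodMk_right x)))
            (integrable_const C) (fun y => hcle (x, y))
        _ = C := by simp
    have : -lam * ∫ y, g y ∂ν = (∫ y, c (x, y) ∂ν) - ∫ y, ψ y ∂ν := by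
      rw [hgval]; field_simp; ring
    linarith [hfle, this ▸ hfle]
  have hFub : ∀ (μ : Measure X) [IsProbabilityMeasure μ] (ψ : C(Y, ℝ)), F μ ψ ≤ C := by
    intro μ _ ψ
    have h1 : ∫ x, f ψ x ∂μ ≤ ∫ _, (C - ∫ y, ψ y ∂ν) ∂μ :=
      integral_mono (hfint ψ μ) (integrable_const _) (fun x => hfub ψ x)
    rw [integral_const] at h1
    simp only [probReal_univ, ENNReal.toReal_one, one_smul] at h1
    rw [hF]
    simp only
    linarith
  have hFbdd : ∀ (μ : Measure X) [IsProbabilityMeasure μ],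
      BddAbove (Set.range (F μ)) := by
    intro μ _
    exact ⟨C, by rintro r ⟨ψ, rfl⟩; exact hFub μ ψ⟩
  -- Wreg = iSup F
  have hW : ∀ μ : Measure X, Wreg lam c ν μ = ⨆ ψ : C(Y, ℝ), F μ ψ := fun μ => rfl
  -- main estimate
  have hmain : ∀ (μ μ' : Measure X) [IsProbabilityMeasure μ] [IsProbabilityMeasure μ'],
      (∀ ψ : C(Y, ℝ), (∫ x, f ψ x ∂μ) - ∫ x, f ψ x ∂μ' ≤ κ * D) →
      Wreg lam c ν μ - Wreg lam c ν μ' ≤ κ * D := by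
    intro μ μ' _ _ hbd
    rw [sub_le_iff_le_add, hW μ, hW μ']
    apply ciSup_le
    intro ψ
    have h1 : F μ ψ ≤ F μ' ψ + κ * D := by
      have := hbd ψ
      rw [hF]
      simp only
      linarith
    have h2 : F μ' ψ ≤ ⨆ ψ' : C(Y, ℝ), F μ' ψ' := le_ciSup (hFbdd μ') ψ
    linarith
  have h12 : Wreg lam c ν μ₁ - Wreg lam c ν μ₂ ≤ κ * D :=
    hmain μ₁ μ₂ fun ψ => le_trans (le_abs_self _) (hKR ψ)
  have h21 : Wreg lam c ν μ₂ - Wreg lam c ν μ₁ ≤ κ * D :=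
    hmain μ₂ μ₁ fun ψ => by
      have := hKR ψ
      rw [abs_sub_comm] at this
      exact le_trans (le_abs_self _) this
  exact abs_sub_le_iff.mpr ⟨h12, h21⟩
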